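/- D_X is closed under α and L: if f ∈ D_X, then α(f) ∈ D_X and L(f) ∈ D_X. -/
import Mathlib


open scoped ENNReal
open Classical
set_option linter.unusedSectionVars false
set_option synthInstance.maxHeartbeats 1000000
set_option maxHeartbeats 1000000

noncomputable section

variable {𝔞 : Type*} [Fintype 𝔞] [Nonempty 𝔞] [TopologicalSpace 𝔞] [DiscreteTopology 𝔞]

/-- The one-sided shift map on the full one-sided shift `𝔞^ℕ`. -/
def shift (x : ℕ → 𝔞) : ℕ → 𝔞 := fun n => x (n + 1)

/-- Concatenation `u x` of a finite word `u` with an infinite sequence `x`. -/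
def wcat (u : List 𝔞) (x : ℕ → 𝔞) : ℕ → 𝔞 := fun n =>
  if h : n < u.length then u.get ⟨n, h⟩ else x (n - u.length)

/-- `l∞(X)`: the C*-algebra of bounded complex-valued functions on `X`,
with pointwise operations and the supremum norm. -/
abbrev Linf (X : Set (ℕ → 𝔞)) : Type _ := lp (fun _ : X => ℂ) ∞

/-- The set `C(u,v) = {vx : x ∈ X, vx ∈ X, ux ∈ X}`. -/
def cyl (X : Set (ℕ → 𝔞)) (u v : List 𝔞) : Set (ℕ → 𝔞) :=
  {y | ∃ x, x ∈ X ∧ wcat u x ∈ X ∧ wcat v x ∈ X ∧ y = wcat v x}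

/-- The indicator function of a subset `S`, as an element of `l∞(X)`. -/
def chi (X S : Set (ℕ → 𝔞)) : Linf X :=
  ⟨fun x => S.indicator (fun _ => (1 : ℂ)) (x : ℕ → 𝔞),
    memℓp_infty ⟨1, by
      rintro r ⟨x, rfl⟩
      by_cases h : (x : ℕ → 𝔞) ∈ S <;> simp [Set.indicator_apply, h]⟩⟩

/-- `D_X`: the smallest C*-subalgebra (norm-closed, star-closed subalgebra) of `l∞(X)`
containing the indicator functions `χ_{C(u,v)}` for all words `u, v`. -/
def Dalg (X : Set (ℕ → 𝔞)) : NonUnitalStarSubalgebra ℂ (Linf X) :=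
  (NonUnitalStarAlgebra.adjoin ℂ
    {f : Linf X | ∃ u v : List 𝔞, f = chi X (cyl X u v)}).topologicalClosure

lemma chi_cyl_mem_Dalg (X : Set (ℕ → 𝔞)) (u v : List 𝔞) : chi X (cyl X u v) ∈ Dalg X :=
  (NonUnitalStarAlgebra.adjoin ℂ _).le_topologicalClosure
    (NonUnitalStarAlgebra.subset_adjoin ℂ _ ⟨u, v, rfl⟩)

/-- The map `α : l∞(X) → l∞(X)`, `α(f)(x) = f(σ x)`. -/
def alphaMap (X : Set (ℕ → 𝔞)) (hX : ∀ x ∈ X, shift x ∈ X) (f : Linf X) : Linf X :=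
  ⟨fun x => f ⟨shift (x : ℕ → 𝔞), hX _ x.2⟩,
    memℓp_infty ⟨‖f‖, by
      rintro r ⟨x, rfl⟩
      exact lp.norm_apply_le_norm ENNReal.top_ne_zero f _⟩⟩

/-- The set `σ⁻¹({x})` of preimages of `x` in `X` under the shift. -/
def preims (X : Set (ℕ → 𝔞)) (x : ℕ → 𝔞) : Set X :=
  {y : X | shift (y : ℕ → 𝔞) = x}

lemma preims_finite (X : Set (ℕ → 𝔞)) (x : ℕ → 𝔞) : (preims X x).Finite := by
  apply Set.Finite.of_finite_image (f := fun y : X => (y : ℕ → 𝔞) 0) (Set.toFinite _)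
  intro y hy z hz h
  apply Subtype.ext
  funext n
  cases n with
  | zero => exact h
  | succ m =>
    have hy' : shift (y : ℕ → 𝔞) = x := hy
    have hz' : shift (z : ℕ → 𝔞) = x := hz
    exact congrFun (hy'.trans hz'.symm) m

lemma aux_norm_le (X : Set (ℕ → 𝔞)) (f : Linf X) (S : Set X) (hS : S.Finite) :
    ‖((S.ncard : ℂ))⁻¹ * ∑ᶠ y ∈ S, f y‖ ≤ ‖f‖ := by
  rw [finsum_mem_eq_finite_toFinset_sum _ hS]
  have hcard : S.ncard = hS.toFinset.card := Set.ncard_eq_toFinset_card _ hS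
  rcases Nat.eq_zero_or_pos hS.toFinset.card with h0 | hpos
  · have he : hS.toFinset = ∅ := Finset.card_eq_zero.mp h0
    rw [he]
    simp only [Finset.sum_empty, mul_zero, norm_zero]
    exact norm_nonneg f
  · have hb : ‖∑ y ∈ hS.toFinset, (f : ∀ _ : X, ℂ) y‖ ≤ (hS.toFinset.card : ℝ) * ‖f‖ := by
      calc ‖∑ y ∈ hS.toFinset, (f : ∀ _ : X, ℂ) y‖ ≤ ∑ y ∈ hS.toFinset, ‖(f : ∀ _ : X, ℂ) y‖ :=
            norm_sum_le _ _
      _ ≤ hS.toFinset.card • ‖f‖ := Finset.sum_le_card_nsmul _ _ _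
            (fun y _ => lp.norm_apply_le_norm ENNReal.top_ne_zero f y)
      _ = (hS.toFinset.card : ℝ) * ‖f‖ := nsmul_eq_mul _ _
    have hno : ‖((S.ncard : ℂ))⁻¹‖ = ((hS.toFinset.card : ℝ))⁻¹ := by
      rw [norm_inv, hcard]
      norm_num
    calc ‖((S.ncard : ℂ))⁻¹ * ∑ y ∈ hS.toFinset, (f : ∀ _ : X, ℂ) y‖
        = ((hS.toFinset.card : ℝ))⁻¹ * ‖∑ y ∈ hS.toFinset, (f : ∀ _ : X, ℂ) y‖ := by
          rw [norm_mul, hno]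
    _ ≤ ((hS.toFinset.card : ℝ))⁻¹ * ((hS.toFinset.card : ℝ) * ‖f‖) := by
          apply mul_le_mul_of_nonneg_left hb
          positivity
    _ = ‖f‖ := by
          rw [← mul_assoc, inv_mul_cancel₀ (by positivity), one_mul]

/-- The transfer operator `L : l∞(X) → l∞(X)`:
`L(f)(x)` is the average of `f` over `σ⁻¹({x})` if `x ∈ σ(X)`, and `0` otherwise. -/
def Lmap (X : Set (ℕ → 𝔞)) (f : Linf X) : Linf X :=
  ⟨fun x => if (x : ℕ → 𝔞) ∈ shift '' X then
      (((preims X (x : ℕ → 𝔞)).ncard : ℂ))⁻¹ * ∑ᶠ y ∈ preims X (x : ℕ → 𝔞), f y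
    else 0,
    memℓp_infty ⟨‖f‖, by
      rintro r ⟨x, rfl⟩
      dsimp only
      split_ifs with h
      · exact aux_norm_le X f _ (preims_finite X _)
      · rw [norm_zero]; exact norm_nonneg f⟩⟩

/-! ### Basic lemmas on `wcat` and `shift` -/

lemma wcat_nil (x : ℕ → 𝔞) : wcat [] x = x := by
  funext n; simp [wcat]

lemma wcat_apply_add (u : List 𝔞) (x : ℕ → 𝔞) (n : ℕ) : wcat u x (u.length + n) = x n := by
  have h : ¬ (u.length + n < u.length) := by omega
  simp [wcat, h]

lemma wcat_inj {u : List 𝔞} {x y : ℕ → 𝔞} (h : wcat u x = wcat u y) : x = y := by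
  funext n
  have := congrFun h (u.length + n)
  simpa [wcat_apply_add] using this

lemma wcat_cons_zero (a : 𝔞) (v : List 𝔞) (x : ℕ → 𝔞) : wcat (a :: v) x 0 = a := by
  simp [wcat]

lemma wcat_cons_succ (a : 𝔞) (l : List 𝔞) (x : ℕ → 𝔞) (m : ℕ) :
    wcat (a :: l) x (m + 1) = wcat l x m := by
  by_cases h : m < l.length
  · have h2 : m + 1 < (a :: l).length := by simp; omega
    simp [wcat, h, h2]
  · have h2 : ¬ (m + 1 < (a :: l).length) := by simp; omega
    have h3 : m + 1 - (a :: l).length = m - l.length := by simp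
    simp only [wcat, dif_neg h, dif_neg h2, h3]

lemma shift_wcat_cons (a : 𝔞) (v : List 𝔞) (x : ℕ → 𝔞) :
    shift (wcat (a :: v) x) = wcat v x := by
  funext n
  exact wcat_cons_succ a v x n

lemma wcat_append (u w : List 𝔞) (x : ℕ → 𝔞) : wcat (u ++ w) x = wcat u (wcat w x) := by
  funext n
  induction u generalizing n with
  | nil => rw [List.nil_append, wcat_nil]
  | cons a u ih =>
    cases n with
    | zero => rw [List.cons_append, wcat_cons_zero, wcat_cons_zero]
    | succ m => rw [List.cons_append, wcat_cons_succ, wcat_cons_succ, ih]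

lemma wcat_head_shift (y : ℕ → 𝔞) : wcat [y 0] (shift y) = y := by
  funext n
  cases n with
  | zero => simp [wcat]
  | succ m =>
    rw [wcat_cons_succ, wcat_nil]
    rfl

lemma wcat_singleton_shift (a : 𝔞) (x : ℕ → 𝔞) : shift (wcat [a] x) = x := by
  have := shift_wcat_cons a [] x
  rwa [wcat_nil] at this

lemma wcat_prefix {v v' : List 𝔞} {x x' : ℕ → 𝔞} (h : wcat v x = wcat v' x')
    (hle : v.length ≤ v'.length) :
    v' = v ++ v'.drop v.length ∧ x = wcat (v'.drop v.length) x' := by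
  have htake : v'.take v.length = v := by
    apply List.ext_getElem
    · simp [hle]
    · intro i hi1 hi2
      have hiv : i < v.length := by simpa using hi2
      have hiv' : i < v'.length := lt_of_lt_of_le hiv hle
      have := congrFun h i
      simp [wcat, hiv, hiv'] at this
      simpa [List.getElem_take] using this.symm
  have happ : v' = v ++ v'.drop v.length := by
    conv_lhs => rw [← List.take_append_drop v.length v', htake]
  refine ⟨happ, ?_⟩
  rw [happ, wcat_append] at h
  exact wcat_inj h
/-! ### Lemmas on `chi` -/

lemma chi_apply (X S : Set (ℕ → 𝔞)) (x : X) :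
    chi X S x = S.indicator (fun _ => (1 : ℂ)) (x : ℕ → 𝔞) := rfl

lemma chi_mul (X S T : Set (ℕ → 𝔞)) : chi X S * chi X T = chi X (S ∩ T) := by
  apply lp.ext
  rw [lp.infty_coeFn_mul]
  funext x
  simp only [Pi.mul_apply, chi_apply, Set.indicator_apply, Set.mem_inter_iff]
  by_cases hS : (x : ℕ → 𝔞) ∈ S <;> by_cases hT : (x : ℕ → 𝔞) ∈ T <;> simp [hS, hT]

lemma chi_star (X S : Set (ℕ → 𝔞)) : star (chi X S) = chi X S := by
  apply lp.ext
  rw [lp.coeFn_star]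
  funext x
  simp only [Pi.star_apply, chi_apply, Set.indicator_apply]
  by_cases hS : (x : ℕ → 𝔞) ∈ S <;> simp [hS]

lemma chi_empty (X : Set (ℕ → 𝔞)) : chi X (∅ : Set (ℕ → 𝔞)) = 0 := by
  apply lp.ext
  funext x
  simp [chi_apply]

/-! ### The sets `D(F, v)` -/

/-- The set `{vx : x ∈ X, vx ∈ X, ∀ u ∈ F, ux ∈ X}`. -/
def Dset (X : Set (ℕ → 𝔞)) (F : Finset (List 𝔞)) (v : List 𝔞) : Set (ℕ → 𝔞) :=
  {y | ∃ x, x ∈ X ∧ wcat v x ∈ X ∧ (∀ u ∈ F, wcat u x ∈ X) ∧ y = wcat v x}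

lemma cyl_eq_Dset (X : Set (ℕ → 𝔞)) (u v : List 𝔞) : cyl X u v = Dset X {u} v := by
  ext y
  constructor
  · rintro ⟨x, hx, hux, hvx, rfl⟩
    exact ⟨x, hx, hvx, by simpa using hux, rfl⟩
  · rintro ⟨x, hx, hvx, hF, rfl⟩
    exact ⟨x, hx, by simpa using hF u (Finset.mem_singleton_self u), hvx, rfl⟩

lemma Dset_empty_words (X : Set (ℕ → 𝔞)) (v : List 𝔞) :
    Dset X (∅ : Finset (List 𝔞)) v = cyl X [] v := by
  ext y
  constructor
  · rintro ⟨x, hx, hvx, -, rfl⟩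
    exact ⟨x, hx, by rwa [wcat_nil], hvx, rfl⟩
  · rintro ⟨x, hx, -, hvx, rfl⟩
    exact ⟨x, hx, hvx, by simp, rfl⟩

lemma Dset_insert (X : Set (ℕ → 𝔞)) (F : Finset (List 𝔞)) (u v : List 𝔞) :
    Dset X (insert u F) v = cyl X u v ∩ Dset X F v := by
  ext y
  constructor
  · rintro ⟨x, hx, hvx, hF, rfl⟩
    exact ⟨⟨x, hx, hF u (Finset.mem_insert_self u F), hvx, rfl⟩,
      ⟨x, hx, hvx, fun w hw => hF w (Finset.mem_insert_of_mem hw), rfl⟩⟩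
  · rintro ⟨⟨x, hx, hux, hvx, rfl⟩, ⟨x', hx', hvx', hF, hxx'⟩⟩
    have hxe : x' = x := wcat_inj hxx'.symm
    refine ⟨x, hx, hvx, ?_, rfl⟩
    intro w hw
    rcases Finset.mem_insert.mp hw with rfl | hw
    · exact hux
    · exact hxe ▸ hF w hw

lemma chi_Dset_mem_Dalg (X : Set (ℕ → 𝔞)) (F : Finset (List 𝔞)) (v : List 𝔞) :
    chi X (Dset X F v) ∈ Dalg X := by
  classical
  induction F using Finset.induction_on with
  | empty =>
    rw [Dset_empty_words]
    exact chi_cyl_mem_Dalg X [] v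
  | @insert u F hu ih =>
    rw [Dset_insert, ← chi_mul]
    exact mul_mem (chi_cyl_mem_Dalg X u v) ih

/-! ### Intersections of `Dset`s -/

lemma Dset_inter_of_append (X : Set (ℕ → 𝔞)) (F F' : Finset (List 𝔞)) (v w : List 𝔞) :
    Dset X F v ∩ Dset X F' (v ++ w) =
      Dset X (insert w (F' ∪ F.image (fun u => u ++ w))) (v ++ w) := by
  classical
  ext y
  constructor
  · rintro ⟨⟨x, hx, hvx, hF, hy1⟩, ⟨x', hx', hvx', hF', rfl⟩⟩
    have hxw : x = wcat w x' := by
      rw [wcat_append] at hy1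
      exact (wcat_inj hy1).symm
    refine ⟨x', hx', hvx', ?_, rfl⟩
    intro u hu
    rcases Finset.mem_insert.mp hu with rfl | hu
    · rw [← hxw]; exact hx
    · rcases Finset.mem_union.mp hu with hu | hu
      · exact hF' u hu
      · rcases Finset.mem_image.mp hu with ⟨u', hu', rfl⟩
        rw [wcat_append, ← hxw]
        exact hF u' hu'
  · rintro ⟨x', hx', hvx', hF'', rfl⟩
    have hw : wcat w x' ∈ X := hF'' w (Finset.mem_insert_self _ _)
    constructor
    · refine ⟨wcat w x', hw, ?_, ?_, ?_⟩
      · rw [← wcat_append]; exact hvx'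
      · intro u hu
        rw [← wcat_append]
        exact hF'' (u ++ w) (Finset.mem_insert_of_mem (Finset.mem_union_right _
          (Finset.mem_image_of_mem _ hu)))
      · rw [wcat_append]
    · refine ⟨x', hx', hvx', ?_, rfl⟩
      intro u hu
      exact hF'' u (Finset.mem_insert_of_mem (Finset.mem_union_left _ hu))

lemma Dset_subset_wcat {X : Set (ℕ → 𝔞)} {F : Finset (List 𝔞)} {v : List 𝔞} {y : ℕ → 𝔞}
    (hy : y ∈ Dset X F v) : ∃ x, y = wcat v x := by
  rcases hy with ⟨x, -, -, -, rfl⟩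
  exact ⟨x, rfl⟩

lemma Dset_inter (X : Set (ℕ → 𝔞)) (F F' : Finset (List 𝔞)) (v v' : List 𝔞) :
    (∃ F'' v'', Dset X F v ∩ Dset X F' v' = Dset X F'' v'') ∨
      Dset X F v ∩ Dset X F' v' = ∅ := by
  classical
  by_cases hne : (Dset X F v ∩ Dset X F' v').Nonempty
  · left
    obtain ⟨y, hy1, hy2⟩ := hne
    obtain ⟨x, rfl⟩ := Dset_subset_wcat hy1
    obtain ⟨x', hyx'⟩ := Dset_subset_wcat hy2
    by_cases hle : v.length ≤ v'.length
    · obtain ⟨happ, -⟩ := wcat_prefix hyx' hle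
      rw [happ] at *
      exact ⟨_, _, Dset_inter_of_append X F F' v _⟩
    · obtain ⟨happ, -⟩ := wcat_prefix hyx'.symm (le_of_not_ge hle)
      rw [happ] at *
      rw [Set.inter_comm]
      exact ⟨_, _, Dset_inter_of_append X F' F v' _⟩
  · right
    exact Set.not_nonempty_iff_eq_empty.mp hne
/-! ### The sets `S(F, v, a)` governing `L` on indicators -/

/-- For `x ∈ X`, membership `x ∈ Sset X F v a` records that `ax ∈ X` and `ax ∈ D(F,v)`. -/
def Sset (X : Set (ℕ → 𝔞)) (F : Finset (List 𝔞)) : List 𝔞 → 𝔞 → Set (ℕ → 𝔞)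
  | [], a => Dset X (insert [a] (F.image (fun u => u ++ [a]))) []
  | b :: v', a => if a = b then Dset X (insert (b :: v') F) v' else ∅

lemma mem_Dset_nil_iff {X : Set (ℕ → 𝔞)} {F : Finset (List 𝔞)} {y : ℕ → 𝔞} :
    y ∈ Dset X F [] ↔ y ∈ X ∧ ∀ u ∈ F, wcat u y ∈ X := by
  constructor
  · rintro ⟨x, hx, -, hF, rfl⟩
    rw [wcat_nil]
    exact ⟨hx, hF⟩
  · rintro ⟨hy, hF⟩
    exact ⟨y, hy, by rwa [wcat_nil], hF, (wcat_nil y).symm⟩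

lemma Sset_imp_wcat_mem {X : Set (ℕ → 𝔞)} {F : Finset (List 𝔞)} {v : List 𝔞} {a : 𝔞}
    {x : ℕ → 𝔞} (hx : x ∈ Sset X F v a) : wcat [a] x ∈ X := by
  match v with
  | [] =>
    rcases mem_Dset_nil_iff.mp hx with ⟨-, hF⟩
    exact hF [a] (Finset.mem_insert_self _ _)
  | b :: v' =>
    by_cases hab : a = b
    · rw [Sset, if_pos hab] at hx
      subst hab
      rcases hx with ⟨z, hz, hvz, hF, rfl⟩
      have : wcat [a] (wcat v' z) = wcat (a :: v') z := by
        rw [← wcat_append]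
        rfl
      rw [this]
      exact hF (a :: v') (Finset.mem_insert_self _ _)
    · rw [Sset, if_neg hab] at hx
      exact absurd hx (Set.notMem_empty x)

lemma mem_Sset_iff {X : Set (ℕ → 𝔞)} {F : Finset (List 𝔞)} {v : List 𝔞} {a : 𝔞}
    {x : ℕ → 𝔞} (hx : x ∈ X) :
    x ∈ Sset X F v a ↔ wcat [a] x ∈ Dset X F v := by
  match v with
  | [] =>
    rw [Sset, mem_Dset_nil_iff, mem_Dset_nil_iff]
    constructor
    · rintro ⟨-, hF⟩
      refine ⟨hF [a] (Finset.mem_insert_self _ _), ?_⟩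
      intro u hu
      have := hF (u ++ [a]) (Finset.mem_insert_of_mem (Finset.mem_image_of_mem _ hu))
      rwa [wcat_append] at this
    · rintro ⟨ha, hF⟩
      refine ⟨hx, ?_⟩
      intro u hu
      rcases Finset.mem_insert.mp hu with rfl | hu
      · exact ha
      · rcases Finset.mem_image.mp hu with ⟨u', hu', rfl⟩
        rw [wcat_append]
        exact hF u' hu'
  | b :: v' =>
    by_cases hab : a = b
    · subst hab
      rw [Sset, if_pos rfl]
      constructor
      · rintro ⟨z, hz, hvz, hF, rfl⟩
        have he : wcat [a] (wcat v' z) = wcat (a :: v') z := by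
          rw [← wcat_append]; rfl
        refine ⟨z, hz, hF (a :: v') (Finset.mem_insert_self _ _), ?_, he⟩
        intro u hu
        exact hF u (Finset.mem_insert_of_mem hu)
      · rintro ⟨z, hz, hvz, hF, hxz⟩
        have he : wcat (a :: v') z = wcat [a] (wcat v' z) := by
          rw [← wcat_append]; rfl
        rw [he] at hxz
        have hxv : x = wcat v' z := wcat_inj hxz
        refine ⟨z, hz, ?_, ?_, hxv⟩
        · rw [← hxv]; exact hx
        · intro u hu
          rcases Finset.mem_insert.mp hu with rfl | hu
          · exact hvz
          · exact hF u hu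
    · rw [Sset, if_neg hab]
      simp only [Set.mem_empty_iff_false, false_iff]
      rintro ⟨z, hz, hvz, hF, hxz⟩
      apply hab
      have := congrFun hxz 0
      rw [wcat_cons_zero, wcat_cons_zero] at this
      exact this

lemma chi_Sset_mem_Dalg (X : Set (ℕ → 𝔞)) (F : Finset (List 𝔞)) (v : List 𝔞) (a : 𝔞) :
    chi X (Sset X F v a) ∈ Dalg X := by
  match v with
  | [] => exact chi_Dset_mem_Dalg X _ _
  | b :: v' =>
    by_cases hab : a = b
    · rw [Sset, if_pos hab]
      exact chi_Dset_mem_Dalg X _ _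
    · rw [Sset, if_neg hab, chi_empty]
      exact zero_mem _

/-! ### The set of letters extending a point, and preimages under the shift -/

/-- The set of letters `a` with `ax ∈ X`. -/
def extSet (X : Set (ℕ → 𝔞)) (x : ℕ → 𝔞) : Finset 𝔞 :=
  Finset.univ.filter (fun a => wcat [a] x ∈ X)

lemma mem_extSet {X : Set (ℕ → 𝔞)} {x : ℕ → 𝔞} {a : 𝔞} :
    a ∈ extSet X x ↔ wcat [a] x ∈ X := by
  simp [extSet]

lemma extSet_nonempty_of_mem {X : Set (ℕ → 𝔞)} {x : ℕ → 𝔞} (hx : x ∈ shift '' X) :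
    (extSet X x).Nonempty := by
  obtain ⟨y, hy, rfl⟩ := hx
  refine ⟨y 0, mem_extSet.mpr ?_⟩
  rwa [wcat_head_shift]

lemma extSet_empty_of_notMem {X : Set (ℕ → 𝔞)} {x : ℕ → 𝔞} (hx : x ∉ shift '' X) :
    extSet X x = ∅ := by
  rw [Finset.eq_empty_iff_forall_notMem]
  intro a ha
  exact hx ⟨wcat [a] x, mem_extSet.mp ha, wcat_singleton_shift a x⟩

lemma mem_preims_toFinset {X : Set (ℕ → 𝔞)} {x : X} {y : X} :
    y ∈ (preims_finite X (x : ℕ → 𝔞)).toFinset ↔ shift (y : ℕ → 𝔞) = (x : ℕ → 𝔞) := by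
  rw [Set.Finite.mem_toFinset]
  rfl

lemma eq_wcat_head {X : Set (ℕ → 𝔞)} {x : X} {y : X}
    (hs : shift (y : ℕ → 𝔞) = (x : ℕ → 𝔞)) :
    (y : ℕ → 𝔞) = wcat [(y : ℕ → 𝔞) 0] (x : ℕ → 𝔞) := by
  conv_lhs => rw [← wcat_head_shift (y : ℕ → 𝔞)]
  rw [hs]

lemma preims_sum_eq (X : Set (ℕ → 𝔞)) (x : X) (φ : (ℕ → 𝔞) → ℂ) :
    ∑ y ∈ (preims_finite X (x : ℕ → 𝔞)).toFinset, φ (y : ℕ → 𝔞)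
      = ∑ a ∈ extSet X (x : ℕ → 𝔞), φ (wcat [a] (x : ℕ → 𝔞)) := by
  refine Finset.sum_bij (fun y _ => (y : ℕ → 𝔞) 0) ?_ ?_ ?_ ?_
  · intro y hy
    have hy_eq := eq_wcat_head (mem_preims_toFinset.mp hy)
    show (y : ℕ → 𝔞) 0 ∈ extSet X (x : ℕ → 𝔞)
    rw [mem_extSet, ← hy_eq]
    exact y.2
  · intro y1 hy1 y2 hy2 h0
    have h0' : (y1 : ℕ → 𝔞) 0 = (y2 : ℕ → 𝔞) 0 := h0
    apply Subtype.ext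
    rw [eq_wcat_head (mem_preims_toFinset.mp hy1),
      eq_wcat_head (mem_preims_toFinset.mp hy2), h0']
  · intro a ha
    rw [mem_extSet] at ha
    refine ⟨⟨wcat [a] (x : ℕ → 𝔞), ha⟩, ?_, ?_⟩
    · rw [mem_preims_toFinset]
      exact wcat_singleton_shift a (x : ℕ → 𝔞)
    · exact wcat_cons_zero a [] (x : ℕ → 𝔞)
  · intro y hy
    have hy_eq := eq_wcat_head (mem_preims_toFinset.mp hy)
    show φ (y : ℕ → 𝔞) = φ (wcat [(y : ℕ → 𝔞) 0] (x : ℕ → 𝔞))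
    rw [← hy_eq]

lemma preims_ncard_eq (X : Set (ℕ → 𝔞)) (x : X) :
    (preims X (x : ℕ → 𝔞)).ncard = (extSet X (x : ℕ → 𝔞)).card := by
  classical
  rw [Set.ncard_eq_toFinset_card _ (preims_finite X (x : ℕ → 𝔞))]
  refine Finset.card_bij (fun y _ => (y : ℕ → 𝔞) 0) ?_ ?_ ?_
  · intro y hy
    have hy_eq := eq_wcat_head (mem_preims_toFinset.mp hy)
    show (y : ℕ → 𝔞) 0 ∈ extSet X (x : ℕ → 𝔞)
    rw [mem_extSet, ← hy_eq]
    exact y.2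
  · intro y1 hy1 y2 hy2 h0
    have h0' : (y1 : ℕ → 𝔞) 0 = (y2 : ℕ → 𝔞) 0 := h0
    apply Subtype.ext
    rw [eq_wcat_head (mem_preims_toFinset.mp hy1),
      eq_wcat_head (mem_preims_toFinset.mp hy2), h0']
  · intro a ha
    rw [mem_extSet] at ha
    refine ⟨⟨wcat [a] (x : ℕ → 𝔞), ha⟩, ?_, ?_⟩
    · rw [mem_preims_toFinset]
      exact wcat_singleton_shift a (x : ℕ → 𝔞)
    · exact wcat_cons_zero a [] (x : ℕ → 𝔞)
/-! ### Algebraic properties of `alphaMap` -/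

section alphaProps

variable (X : Set (ℕ → 𝔞)) (hX : ∀ x ∈ X, shift x ∈ X)

lemma alphaMap_coe (f : Linf X) :
    ⇑(alphaMap X hX f) = fun x : X => f ⟨shift (x : ℕ → 𝔞), hX _ x.2⟩ := rfl

lemma alphaMap_add (f g : Linf X) :
    alphaMap X hX (f + g) = alphaMap X hX f + alphaMap X hX g := by
  apply lp.ext
  rw [lp.coeFn_add, alphaMap_coe, alphaMap_coe, alphaMap_coe]
  funext x
  rw [Pi.add_apply]
  exact congrFun (lp.coeFn_add f g) _

lemma alphaMap_zero : alphaMap X hX (0 : Linf X) = 0 := by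
  apply lp.ext
  rw [alphaMap_coe, lp.coeFn_zero]
  funext x
  exact congrFun (lp.coeFn_zero (E := fun _ : X => ℂ) (p := ∞)) _

lemma alphaMap_smul (c : ℂ) (f : Linf X) :
    alphaMap X hX (c • f) = c • alphaMap X hX f := by
  apply lp.ext
  rw [lp.coeFn_smul, alphaMap_coe, alphaMap_coe]
  funext x
  rw [Pi.smul_apply]
  exact congrFun (lp.coeFn_smul c f) _

lemma alphaMap_mul (f g : Linf X) :
    alphaMap X hX (f * g) = alphaMap X hX f * alphaMap X hX g := by
  apply lp.ext
  rw [lp.infty_coeFn_mul, alphaMap_coe, alphaMap_coe, alphaMap_coe]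
  funext x
  rw [Pi.mul_apply]
  exact congrFun (lp.infty_coeFn_mul f g) _

lemma alphaMap_star (f : Linf X) :
    alphaMap X hX (star f) = star (alphaMap X hX f) := by
  apply lp.ext
  rw [lp.coeFn_star, alphaMap_coe, alphaMap_coe]
  funext x
  rw [Pi.star_apply]
  exact congrFun (lp.coeFn_star f) _

lemma alphaMap_norm_le (f : Linf X) : ‖alphaMap X hX f‖ ≤ ‖f‖ :=
  lp.norm_le_of_forall_le (norm_nonneg f) fun x =>
    lp.norm_apply_le_norm ENNReal.top_ne_zero f _

/-- `α` as a continuous linear map. -/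
def alphaCLM : Linf X →L[ℂ] Linf X :=
  LinearMap.mkContinuous
    { toFun := alphaMap X hX
      map_add' := alphaMap_add X hX
      map_smul' := alphaMap_smul X hX } 1
    (fun f => by rw [one_mul]; exact alphaMap_norm_le X hX f)

lemma alphaCLM_apply (f : Linf X) : alphaCLM X hX f = alphaMap X hX f := rfl

/-- The key computation: `α` of the indicator of `D(F,v)` is the sum of the
indicators of `D(F, av)` over all letters `a`. -/
lemma alphaMap_chi_Dset (F : Finset (List 𝔞)) (v : List 𝔞) :
    alphaMap X hX (chi X (Dset X F v)) = ∑ a : 𝔞, chi X (Dset X F (a :: v)) := by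
  apply lp.ext
  rw [alphaMap_coe, lp.coeFn_sum]
  funext y
  rw [Finset.sum_apply]
  have key1 : ∀ a : 𝔞, (y : ℕ → 𝔞) ∈ Dset X F (a :: v) → a = (y : ℕ → 𝔞) 0 := by
    rintro a ⟨z, hz, hvz, hF, hyz⟩
    have := congrFun hyz 0
    rw [wcat_cons_zero] at this
    exact this.symm
  have key2 : shift (y : ℕ → 𝔞) ∈ Dset X F v ↔
      (y : ℕ → 𝔞) ∈ Dset X F (((y : ℕ → 𝔞) 0) :: v) := by
    constructor
    · rintro ⟨z, hz, hvz, hF, hsz⟩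
      have hy_eq : (y : ℕ → 𝔞) = wcat (((y : ℕ → 𝔞) 0) :: v) z := by
        rw [show (((y : ℕ → 𝔞) 0) :: v) = [(y : ℕ → 𝔞) 0] ++ v from rfl, wcat_append,
          ← hsz, wcat_head_shift]
      exact ⟨z, hz, hy_eq ▸ y.2, hF, hy_eq⟩
    · rintro ⟨z, hz, hvz, hF, hyz⟩
      refine ⟨z, hz, ?_, hF, ?_⟩
      · rw [show wcat v z = shift (wcat (((y : ℕ → 𝔞) 0) :: v) z) from
          (shift_wcat_cons _ _ _).symm, ← hyz]
        exact hX _ y.2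
      · rw [hyz, shift_wcat_cons]
  rw [Finset.sum_eq_single ((y : ℕ → 𝔞) 0)]
  · simp only [chi_apply, Set.indicator_apply]
    exact if_congr key2 rfl rfl
  · intro b _ hb
    simp only [chi_apply]
    exact Set.indicator_of_notMem (fun hmem => hb (key1 b hmem)) _
  · intro habs
    exact absurd (Finset.mem_univ _) habs

end alphaProps

/-! ### The span of indicators of `D(F,v)` sets -/

section MspanSection

variable (X : Set (ℕ → 𝔞))

/-- The collection of all indicators of sets `D(F, v)`. -/
def Pset : Set (Linf X) :=
  {f | ∃ (F : Finset (List 𝔞)) (v : List 𝔞), f = chi X (Dset X F v)}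

/-- The linear span of the indicators of sets `D(F, v)`. -/
def Mspan : Submodule ℂ (Linf X) := Submodule.span ℂ (Pset X)

lemma Pset_mul_mem {f g : Linf X} (hf : f ∈ Pset X) (hg : g ∈ Pset X) :
    f * g ∈ Mspan X := by
  obtain ⟨F, v, rfl⟩ := hf
  obtain ⟨F', v', rfl⟩ := hg
  rw [chi_mul]
  rcases Dset_inter X F F' v v' with ⟨F'', v'', he⟩ | he
  · rw [he]
    exact Submodule.subset_span ⟨F'', v'', rfl⟩
  · rw [he, chi_empty]
    exact zero_mem _

lemma Mspan_mul_mem {f g : Linf X} (hf : f ∈ Mspan X) (hg : g ∈ Mspan X) :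
    f * g ∈ Mspan X := by
  induction hf using Submodule.span_induction with
  | mem p hp =>
    induction hg using Submodule.span_induction with
    | mem q hq => exact Pset_mul_mem X hp hq
    | zero => rw [mul_zero]; exact zero_mem _
    | add a b _ _ ha hb => rw [mul_add]; exact add_mem ha hb
    | smul c a _ ha => rw [mul_smul_comm]; exact Submodule.smul_mem _ _ ha
  | zero => rw [zero_mul]; exact zero_mem _
  | add a b _ _ ha hb => rw [add_mul]; exact add_mem ha hb
  | smul c a _ ha => rw [smul_mul_assoc]; exact Submodule.smul_mem _ _ ha

lemma Mspan_star_mem {f : Linf X} (hf : f ∈ Mspan X) : star f ∈ Mspan X := by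
  induction hf using Submodule.span_induction with
  | mem p hp =>
    obtain ⟨F, v, rfl⟩ := hp
    rw [chi_star]
    exact Submodule.subset_span ⟨F, v, rfl⟩
  | zero => rw [star_zero]; exact zero_mem _
  | add a b _ _ ha hb => rw [star_add]; exact add_mem ha hb
  | smul c a _ ha => rw [star_smul]; exact Submodule.smul_mem _ _ ha

lemma mem_Mspan_of_mem_adjoin {f : Linf X}
    (hf : f ∈ NonUnitalStarAlgebra.adjoin ℂ
      {f : Linf X | ∃ u v : List 𝔞, f = chi X (cyl X u v)}) :
    f ∈ Mspan X := by
  induction hf using NonUnitalStarAlgebra.adjoin_induction with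
  | mem q hq =>
    obtain ⟨u, v, rfl⟩ := hq
    exact Submodule.subset_span ⟨{u}, v, by rw [cyl_eq_Dset]⟩
  | add a b _ _ ha hb => exact add_mem ha hb
  | zero => exact zero_mem _
  | mul a b _ _ ha hb => exact Mspan_mul_mem X ha hb
  | smul c a _ ha => exact Submodule.smul_mem _ _ ha
  | star a _ ha => exact Mspan_star_mem X ha

end MspanSection
/-! ### Algebraic properties of `Lmap` -/

section LProps

variable (X : Set (ℕ → 𝔞))

lemma Lmap_apply (f : Linf X) (x : X) :
    Lmap X f x = if (x : ℕ → 𝔞) ∈ shift '' X then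
      (((preims X (x : ℕ → 𝔞)).ncard : ℂ))⁻¹ *
        ∑ y ∈ (preims_finite X (x : ℕ → 𝔞)).toFinset, f y
    else 0 := by
  show (if (x : ℕ → 𝔞) ∈ shift '' X then
      (((preims X (x : ℕ → 𝔞)).ncard : ℂ))⁻¹ * ∑ᶠ y ∈ preims X (x : ℕ → 𝔞), f y
    else 0) = _
  rw [finsum_mem_eq_finite_toFinset_sum _ (preims_finite X (x : ℕ → 𝔞))]

lemma Lmap_add (f g : Linf X) : Lmap X (f + g) = Lmap X f + Lmap X g := by
  apply lp.ext
  funext x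
  rw [congrFun (lp.coeFn_add (Lmap X f) (Lmap X g)) x, Pi.add_apply,
    Lmap_apply, Lmap_apply, Lmap_apply]
  split_ifs with h
  · have : ∀ y : X, (f + g) y = f y + g y := fun y => congrFun (lp.coeFn_add f g) y
    simp only [this, Finset.sum_add_distrib, mul_add]
  · rw [add_zero]

lemma Lmap_zero : Lmap X (0 : Linf X) = 0 := by
  apply lp.ext
  funext x
  have h0 : ∀ y : X, (0 : Linf X) y = 0 := fun y =>
    congrFun (lp.coeFn_zero (E := fun _ : X => ℂ) (p := ∞)) y
  rw [Lmap_apply, h0 x]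
  simp only [h0, Finset.sum_const_zero, mul_zero, ite_self]

lemma Lmap_smul (c : ℂ) (f : Linf X) : Lmap X (c • f) = c • Lmap X f := by
  apply lp.ext
  funext x
  rw [congrFun (lp.coeFn_smul c (Lmap X f)) x, Pi.smul_apply, Lmap_apply, Lmap_apply,
    smul_eq_mul]
  split_ifs with h
  · have : ∀ y : X, (c • f) y = c * f y := fun y => by
      rw [congrFun (lp.coeFn_smul c f) y, Pi.smul_apply, smul_eq_mul]
    simp only [this, ← Finset.mul_sum]
    ring
  · rw [mul_zero]

lemma Lmap_norm_le (f : Linf X) : ‖Lmap X f‖ ≤ ‖f‖ := by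
  refine lp.norm_le_of_forall_le (norm_nonneg f) fun x => ?_
  show ‖(if (x : ℕ → 𝔞) ∈ shift '' X then
      (((preims X (x : ℕ → 𝔞)).ncard : ℂ))⁻¹ * ∑ᶠ y ∈ preims X (x : ℕ → 𝔞), f y
    else 0)‖ ≤ ‖f‖
  split_ifs with h
  · exact aux_norm_le X f _ (preims_finite X _)
  · rw [norm_zero]; exact norm_nonneg f

/-- `L` as a continuous linear map. -/
def LCLM : Linf X →L[ℂ] Linf X :=
  LinearMap.mkContinuous
    { toFun := Lmap X
      map_add' := Lmap_add X
      map_smul' := Lmap_smul X } 1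
    (fun f => by rw [one_mul]; exact Lmap_norm_le X f)

lemma LCLM_apply (f : Linf X) : LCLM X f = Lmap X f := rfl

/-! ### Pointwise evaluation lemmas -/

lemma lp_pow_apply (g : Linf X) (k : ℕ) (x : X) :
    (g ^ (k + 1)) x = (g x) ^ (k + 1) := by
  induction k with
  | zero => rw [pow_one, pow_one]
  | succ n ih =>
    rw [pow_succ, congrFun (lp.infty_coeFn_mul (g ^ (n + 1)) g) x,
      Pi.mul_apply, ih, ← pow_succ]

lemma g_apply (x : X) :
    (∑ a : 𝔞, chi X (Dset X ({[a]} : Finset (List 𝔞)) ([] : List 𝔞))) x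
      = ((extSet X (x : ℕ → 𝔞)).card : ℂ) := by
  classical
  rw [congrFun (lp.coeFn_sum (fun a : 𝔞 =>
    chi X (Dset X ({[a]} : Finset (List 𝔞)) ([] : List 𝔞))) Finset.univ) x,
    Finset.sum_apply]
  have hiff : ∀ a : 𝔞, ((x : ℕ → 𝔞) ∈ Dset X ({[a]} : Finset (List 𝔞)) ([] : List 𝔞))
      ↔ a ∈ extSet X (x : ℕ → 𝔞) := by
    intro a
    rw [mem_Dset_nil_iff, mem_extSet]
    constructor
    · rintro ⟨-, hF⟩
      exact hF [a] (Finset.mem_singleton_self _)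
    · intro h
      exact ⟨x.2, by simpa using h⟩
  calc ∑ a : 𝔞, chi X (Dset X ({[a]} : Finset (List 𝔞)) ([] : List 𝔞)) x
      = ∑ a : 𝔞, if a ∈ extSet X (x : ℕ → 𝔞) then (1 : ℂ) else 0 := by
        refine Finset.sum_congr rfl fun a _ => ?_
        rw [chi_apply, Set.indicator_apply]
        exact if_congr (hiff a) rfl rfl
    _ = ((extSet X (x : ℕ → 𝔞)).card : ℂ) := by
        rw [Finset.sum_ite_mem, Finset.univ_inter, Finset.sum_const, nsmul_eq_mul, mul_one]

/-- The key computation: `L` applied to the indicator of `D(F,v)` lies in `D_X`. -/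
lemma Lmap_chi_Dset_mem (F : Finset (List 𝔞)) (v : List 𝔞) :
    Lmap X (chi X (Dset X F v)) ∈ Dalg X := by
  classical
  set g : Linf X := ∑ a : 𝔞, chi X (Dset X ({[a]} : Finset (List 𝔞)) ([] : List 𝔞)) with hgdef
  set r : Polynomial ℂ := Lagrange.interpolate (Finset.Icc 1 (Fintype.card 𝔞))
    (fun n : ℕ => (n : ℂ)) (fun n : ℕ => ((n : ℂ) * (n : ℂ))⁻¹) with hrdef
  have hgmem : g ∈ Dalg X := sum_mem fun a _ => chi_Dset_mem_Dalg X _ _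
  have hpow : ∀ k : ℕ, g ^ (k + 1) ∈ Dalg X := by
    intro k
    induction k with
    | zero => rw [pow_one]; exact hgmem
    | succ n ih => rw [pow_succ]; exact mul_mem ih hgmem
  set h : Linf X := ∑ n ∈ r.support, r.coeff n • g ^ (n + 1) with hhdef
  have hhmem : h ∈ Dalg X := sum_mem fun n _ => SMulMemClass.smul_mem _ (hpow n)
  set s : Linf X := ∑ a : 𝔞, chi X (Sset X F v a) with hsdef
  have hsmem : s ∈ Dalg X := sum_mem fun a _ => chi_Sset_mem_Dalg X F v a
  have hhx : ∀ x : X, h x = g x * Polynomial.eval (g x) r := by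
    intro x
    rw [hhdef, congrFun (lp.coeFn_sum (fun n => r.coeff n • g ^ (n + 1)) r.support) x,
      Finset.sum_apply]
    rw [Polynomial.eval_eq_sum, Polynomial.sum_def, Finset.mul_sum]
    refine Finset.sum_congr rfl fun n _ => ?_
    rw [congrFun (lp.coeFn_smul (r.coeff n) (g ^ (n + 1))) x, Pi.smul_apply, smul_eq_mul,
      lp_pow_apply, pow_succ]
    ring
  have key : Lmap X (chi X (Dset X F v)) = h * s := by
    apply lp.ext
    funext x
    rw [Lmap_apply, congrFun (lp.infty_coeFn_mul h s) x, Pi.mul_apply, hhx x, g_apply]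
    have hsx : s x = ∑ a ∈ extSet X (x : ℕ → 𝔞),
        Set.indicator (Dset X F v) (fun _ => (1 : ℂ)) (wcat [a] (x : ℕ → 𝔞)) := by
      rw [hsdef, congrFun (lp.coeFn_sum (fun a => chi X (Sset X F v a)) Finset.univ) x,
        Finset.sum_apply]
      rw [← Finset.sum_subset (Finset.subset_univ (extSet X (x : ℕ → 𝔞)))]
      · refine Finset.sum_congr rfl fun a ha => ?_
        rw [chi_apply]
        simp only [Set.indicator_apply]
        exact if_congr (mem_Sset_iff x.2) rfl rfl
      · intro a _ ha
        rw [chi_apply]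
        exact Set.indicator_of_notMem
          (fun hmem => ha (mem_extSet.mpr (Sset_imp_wcat_mem hmem))) _
    rw [hsx]
    have hsum : ∑ y ∈ (preims_finite X (x : ℕ → 𝔞)).toFinset,
        chi X (Dset X F v) y = ∑ a ∈ extSet X (x : ℕ → 𝔞),
        Set.indicator (Dset X F v) (fun _ => (1 : ℂ)) (wcat [a] (x : ℕ → 𝔞)) :=
      preims_sum_eq X x (Set.indicator (Dset X F v) (fun _ => (1 : ℂ)))
    split_ifs with hso
    · have hne : (extSet X (x : ℕ → 𝔞)).Nonempty := extSet_nonempty_of_mem hso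
      set N : ℕ := (extSet X (x : ℕ → 𝔞)).card with hN
      have hN1 : 1 ≤ N := Finset.card_pos.mpr hne
      have hNM : N ≤ Fintype.card 𝔞 := by
        rw [← Finset.card_univ]
        exact Finset.card_le_univ _
      have hinj : Set.InjOn (fun n : ℕ => (n : ℂ)) (Finset.Icc 1 (Fintype.card 𝔞)) :=
        fun a _ b _ hab => Nat.cast_injective hab
      have hNmem : N ∈ Finset.Icc 1 (Fintype.card 𝔞) := Finset.mem_Icc.mpr ⟨hN1, hNM⟩
      have heval : Polynomial.eval ((N : ℂ)) r = ((N : ℂ) * (N : ℂ))⁻¹ := by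
        rw [hrdef]
        exact Lagrange.eval_interpolate_at_node _ hinj hNmem
      have hNne : (N : ℂ) ≠ 0 := Nat.cast_ne_zero.mpr (by omega)
      rw [hsum, preims_ncard_eq, heval, mul_inv, ← mul_assoc, mul_inv_cancel₀ hNne, one_mul]
    · rw [extSet_empty_of_notMem hso]
      simp
  rw [key]
  exact mul_mem hhmem hsmem

lemma Lmap_mem_Dalg_of_mem_Mspan {f : Linf X} (hf : f ∈ Mspan X) :
    Lmap X f ∈ Dalg X := by
  induction hf using Submodule.span_induction with
  | mem p hp =>
    obtain ⟨F, v, rfl⟩ := hp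
    exact Lmap_chi_Dset_mem X F v
  | zero => rw [Lmap_zero]; exact zero_mem _
  | add a b _ _ ha hb => rw [Lmap_add]; exact add_mem ha hb
  | smul c a _ ha => rw [Lmap_smul]; exact SMulMemClass.smul_mem c ha

end LProps
lemma Dalg_isClosed (X : Set (ℕ → 𝔞)) : IsClosed ((Dalg X : Set (Linf X))) :=
  NonUnitalStarSubalgebra.isClosed_topologicalClosure _
/-- `D_X` is closed under `α` and `L`: if `f ∈ D_X`, then
`α(f) ∈ D_X` and `L(f) ∈ D_X`. -/
theorem Dalg_closed_under_alpha_and_L (X : Set (ℕ → 𝔞)) (hXclosed : IsClosed X)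
    (hXinv : ∀ x ∈ X, shift x ∈ X)
    (f : Linf X) (hf : f ∈ Dalg X) :
    alphaMap X hXinv f ∈ Dalg X ∧ Lmap X f ∈ Dalg X := by
  have hfc : f ∈ closure ((NonUnitalStarAlgebra.adjoin ℂ
      {f : Linf X | ∃ u v : List 𝔞, f = chi X (cyl X u v)} :
        NonUnitalStarSubalgebra ℂ (Linf X)) : Set (Linf X)) := hf
  constructor
  · -- closure under α
    have hsub : Set.MapsTo (alphaMap X hXinv)
        ((NonUnitalStarAlgebra.adjoin ℂ
          {f : Linf X | ∃ u v : List 𝔞, f = chi X (cyl X u v)} :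
            NonUnitalStarSubalgebra ℂ (Linf X)) : Set (Linf X))
        (Dalg X : Set (Linf X)) := by
      intro p hp
      rw [SetLike.mem_coe] at hp
      rw [SetLike.mem_coe]
      induction hp using NonUnitalStarAlgebra.adjoin_induction with
      | mem q hq =>
        obtain ⟨u, v, rfl⟩ := hq
        rw [cyl_eq_Dset, alphaMap_chi_Dset]
        exact sum_mem fun a _ => chi_Dset_mem_Dalg X _ _
      | add a b _ _ ha hb => rw [alphaMap_add]; exact add_mem ha hb
      | zero => rw [alphaMap_zero]; exact zero_mem _
      | mul a b _ _ ha hb => rw [alphaMap_mul]; exact mul_mem ha hb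
      | smul c a _ ha => rw [alphaMap_smul]; exact SMulMemClass.smul_mem c ha
      | star a _ ha => rw [alphaMap_star]; exact star_mem ha
    have hcont : Continuous (alphaMap X hXinv) := (alphaCLM X hXinv).continuous
    have hcl : alphaMap X hXinv f ∈ closure (Dalg X : Set (Linf X)) :=
      map_mem_closure hcont hfc hsub
    rwa [IsClosed.closure_eq (Dalg_isClosed X)] at hcl
  · -- closure under L
    have hsub : Set.MapsTo (Lmap X)
        ((NonUnitalStarAlgebra.adjoin ℂ
          {f : Linf X | ∃ u v : List 𝔞, f = chi X (cyl X u v)} :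
            NonUnitalStarSubalgebra ℂ (Linf X)) : Set (Linf X))
        (Dalg X : Set (Linf X)) := by
      intro p hp
      rw [SetLike.mem_coe] at hp
      rw [SetLike.mem_coe]
      exact Lmap_mem_Dalg_of_mem_Mspan X (mem_Mspan_of_mem_adjoin X hp)
    have hcont : Continuous (Lmap X) := (LCLM X).continuous
    have hcl : Lmap X f ∈ closure (Dalg X : Set (Linf X)) :=
      map_mem_closure hcont hfc hsub
    rwa [IsClosed.closure_eq (Dalg_isClosed X)] at hcl

end
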